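/- Let $n \geq 3$ and let $S \subseteq \mathbb{Z}^3$ be the $\mathbb{Z}$-span of $(\tfrac{n(n-1)}{2}, n, \tfrac{n(n+1)}{2})$, $(n(n-1), 0, 0)$, and $(0, 2n, 0)$. The smallest positive integer $m$ such that $m \cdot (1, 0, 1) \in S$ is $\tfrac{1}{2}n(n^2-1)$ if $n$ is odd, and $n(n^2-1)$ if $n$ is even. -/
import Mathlib

lemma tri_mem {a b c v : Fin 3 → ℤ}
    (h : v ∈ Submodule.span ℤ ({a, b, c} : Set (Fin 3 → ℤ))) :
    ∃ x y z : ℤ, v = x • a + y • b + z • c := by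
  rw [Submodule.mem_span_insert] at h
  obtain ⟨x, w, hw, rfl⟩ := h
  rw [Submodule.mem_span_insert] at hw
  obtain ⟨y, u, hu, rfl⟩ := hw
  rw [Submodule.mem_span_singleton] at hu
  obtain ⟨z, rfl⟩ := hu
  exact ⟨x, y, z, by rw [add_assoc]⟩

lemma tri_mem' {a b c : Fin 3 → ℤ} (x y z : ℤ) :
    x • a + y • b + z • c ∈ Submodule.span ℤ ({a, b, c} : Set (Fin 3 → ℤ)) := by
  refine add_mem (add_mem ?_ ?_) ?_ <;>
    exact Submodule.smul_mem _ _ (Submodule.subset_span (by simp))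

theorem stmt5 (n : ℕ) (hn : 3 ≤ n) :
    IsLeast {m : ℕ | 0 < m ∧
        ((m : ℤ) • (![1, 0, 1] : Fin 3 → ℤ)) ∈
          Submodule.span ℤ
            ({![(n : ℤ) * (n - 1) / 2, (n : ℤ), (n : ℤ) * (n + 1) / 2],
              ![(n : ℤ) * (n - 1), 0, 0],
              ![0, 2 * (n : ℤ), 0]} : Set (Fin 3 → ℤ))}
      (if Odd n then n * (n ^ 2 - 1) / 2 else n * (n ^ 2 - 1)) := by
  rcases Nat.even_or_odd n with he | ho
  · -- even case: n = 2k
    obtain ⟨k, hk⟩ := he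
    have hko : ¬ Odd n := by rw [Nat.not_odd_iff_even]; exact ⟨k, hk⟩
    rw [if_neg hko]
    have hk2 : n = 2 * k := by omega
    subst hk2
    have hk1 : 2 ≤ k := by omega
    set K : ℤ := (k : ℤ) with hK
    have hKpos : 2 ≤ K := by simp [hK]; exact_mod_cast hk1
    have h1 : ((2*k : ℕ) : ℤ) = 2*K := by push_cast; ring
    have hv1 : ![((2*k : ℕ) : ℤ) * ((2*k : ℕ) - 1) / 2, ((2*k : ℕ) : ℤ),
        ((2*k : ℕ) : ℤ) * ((2*k : ℕ) + 1) / 2]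
        = ![K * (2*K - 1), 2*K, K * (2*K + 1)] := by
      funext i; fin_cases i <;> simp [h1] <;>
        [ (have : (2*K) * (2*K-1) = 2 * (K * (2*K-1)) := by ring
           omega);
          (have : (2*K) * (2*K+1) = 2 * (K * (2*K+1)) := by ring
           omega) ]
    have hv2 : ![((2*k : ℕ) : ℤ) * ((2*k : ℕ) - 1), 0, 0]
        = ![2*K * (2*K - 1), 0, 0] := by
      funext i; fin_cases i <;> simp [h1]
    have hv3 : ![0, 2 * ((2*k : ℕ) : ℤ), 0] = ![0, 4*K, 0] := by
      funext i; fin_cases i <;> simp [h1]; ring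
    rw [hv1, hv2, hv3]
    have hcast : ((2*k*((2*k)^2 - 1) : ℕ) : ℤ) = 2*K*(4*K^2 - 1) := by
      have : 1 ≤ (2*k)^2 := by nlinarith
      push_cast [this]
      ring
    constructor
    · refine ⟨Nat.mul_pos (by omega) (Nat.sub_pos_of_lt (by nlinarith)), ?_⟩
      have : ((2*k*((2*k)^2 - 1) : ℕ) : ℤ) • (![1, 0, 1] : Fin 3 → ℤ)
          = (2*(2*K-1)) • ![K * (2*K - 1), 2*K, K * (2*K + 1)]
            + 2 • ![2*K * (2*K - 1), 0, 0] + (-(2*K-1)) • ![0, 4*K, 0] := by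
        funext i; fin_cases i <;> simp [hcast] <;> ring
      rw [this]
      exact tri_mem' _ _ _
    · rintro m ⟨hmpos, hmem⟩
      obtain ⟨x, y, z, heq⟩ := tri_mem hmem
      have e0 := congrFun heq 0
      have e1 := congrFun heq 1
      have e2 := congrFun heq 2
      simp [Matrix.cons_val_zero, Matrix.cons_val_one] at e0 e1 e2
      -- e0 : m = x*(K*(2K-1)) + y*(2K*(2K-1)), e1 : 0 = x*2K + z*4K, e2 : m = x*(K*(2K+1))
      have hKne : (2*K : ℤ) ≠ 0 := by positivity
      have hx : x = -2*z := by
        have h : (2*K) * (x + 2*z) = 0 := by linear_combination -e1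
        rcases mul_eq_zero.1 h with h' | h'
        · exact absurd h' hKne
        · linarith
      subst hx
      have key : (2*K-1)*(y - z) = (2*K+1)*(-z) := by
        have h : (2*K) * ((2*K-1)*(y - z)) = (2*K) * ((2*K+1)*(-z)) := by
          linear_combination e2 - e0
        exact mul_left_cancel₀ hKne h
      have hco : IsCoprime (2*K+1) (2*K-1) := ⟨K, -(K+1), by ring⟩
      have hdvd : (2*K+1) ∣ (y - z) :=
        hco.dvd_of_dvd_mul_left ⟨-z, key⟩
      obtain ⟨c, hc⟩ := hdvd
      have hfin : (m : ℤ) = ((2*k*((2*k)^2 - 1) : ℕ) : ℤ) * c := by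
        rw [hcast]
        linear_combination e0 + 2*K*(2*K-1)*hc
      have : ((2*k*((2*k)^2 - 1) : ℕ) : ℤ) ≤ (m : ℤ) :=
        Int.le_of_dvd (by exact_mod_cast hmpos) ⟨c, hfin⟩
      exact_mod_cast this
  · -- odd case: n = 2k+1
    obtain ⟨k, hk⟩ := ho
    rw [if_pos ⟨k, hk⟩]
    subst hk
    have hk1 : 1 ≤ k := by omega
    set K : ℤ := (k : ℤ) with hK
    have hKpos : 1 ≤ K := by simp [hK]; exact_mod_cast hk1
    have h1 : ((2*k+1 : ℕ) : ℤ) = 2*K+1 := by push_cast; ring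
    have hv1 : ![((2*k+1 : ℕ) : ℤ) * ((2*k+1 : ℕ) - 1) / 2, ((2*k+1 : ℕ) : ℤ),
        ((2*k+1 : ℕ) : ℤ) * ((2*k+1 : ℕ) + 1) / 2]
        = ![(2*K+1) * K, 2*K+1, (2*K+1) * (K+1)] := by
      funext i; fin_cases i <;> simp [h1] <;>
        [ (have : (2*K+1) * (2*K) = 2 * ((2*K+1) * K) := by ring
           omega);
          (have : (2*K+1) * (2*K+1+1) = 2 * ((2*K+1) * (K+1)) := by ring
           omega) ]
    have hv2 : ![((2*k+1 : ℕ) : ℤ) * ((2*k+1 : ℕ) - 1), 0, 0]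
        = ![(2*K+1) * (2*K), 0, 0] := by
      funext i; fin_cases i <;> simp [h1]
    have hv3 : ![0, 2 * ((2*k+1 : ℕ) : ℤ), 0] = ![0, 2*(2*K+1), 0] := by
      funext i; fin_cases i <;> simp [h1]
    rw [hv1, hv2, hv3]
    have hnat : (2*k+1)*((2*k+1)^2 - 1) / 2 = 2*((2*k+1)*(k*(k+1))) := by
      have h2 : (2*k+1)^2 = 4*(k*(k+1))+1 := by ring
      have h3 : (2*k+1)*((2*k+1)^2 - 1) = 4*((2*k+1)*(k*(k+1))) := by
        rw [h2, Nat.add_sub_cancel]; ring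
      omega
    have hcast : (((2*k+1)*((2*k+1)^2 - 1) / 2 : ℕ) : ℤ) = 2*(2*K+1)*(K*(K+1)) := by
      rw [hnat]; push_cast; ring
    constructor
    · refine ⟨by rw [hnat]; positivity, ?_⟩
      have : (((2*k+1)*((2*k+1)^2 - 1) / 2 : ℕ) : ℤ) • (![1, 0, 1] : Fin 3 → ℤ)
          = (2*K) • ![(2*K+1) * K, 2*K+1, (2*K+1) * (K+1)]
            + (1:ℤ) • ![(2*K+1) * (2*K), 0, 0] + (-K) • ![0, 2*(2*K+1), 0] := by
        funext i; fin_cases i <;> simp [hcast] <;> ring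
      rw [this]
      exact tri_mem' _ _ _
    · rintro m ⟨hmpos, hmem⟩
      obtain ⟨x, y, z, heq⟩ := tri_mem hmem
      have e0 := congrFun heq 0
      have e1 := congrFun heq 1
      have e2 := congrFun heq 2
      simp [Matrix.cons_val_zero, Matrix.cons_val_one] at e0 e1 e2
      have hNe : (2*K+1 : ℤ) ≠ 0 := by positivity
      have hNe2 : (2*(2*K+1) : ℤ) ≠ 0 := by positivity
      have hx : x = -2*z := by
        have h : (2*K+1) * (x + 2*z) = 0 := by linear_combination -e1
        rcases mul_eq_zero.1 h with h' | h'
        · exact absurd h' hNe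
        · linarith
      subst hx
      have key : K*(y - z) = (K+1)*(-z) := by
        have h : (2*(2*K+1)) * (K*(y - z)) = (2*(2*K+1)) * ((K+1)*(-z)) := by
          linear_combination e2 - e0
        exact mul_left_cancel₀ hNe2 h
      have hco : IsCoprime (K+1) K := ⟨1, -1, by ring⟩
      have hdvd : (K+1) ∣ (y - z) := hco.dvd_of_dvd_mul_left ⟨-z, key⟩
      obtain ⟨c, hc⟩ := hdvd
      have hfin : (m : ℤ) = (((2*k+1)*((2*k+1)^2 - 1) / 2 : ℕ) : ℤ) * c := by
        rw [hcast]
        linear_combination e0 + 2*K*(2*K+1)*hc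
      have : (((2*k+1)*((2*k+1)^2 - 1) / 2 : ℕ) : ℤ) ≤ (m : ℤ) :=
        Int.le_of_dvd (by exact_mod_cast hmpos) ⟨c, hfin⟩
      exact_mod_cast this
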